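/- Let U be a finite set, and consider a uniformly random linear order on U (each of the |U|! orderings being equally likely). Let A, A' ⊆ U with S ∈ A ∩ A' and |A'| ≤ |A|. Then the probability that S is the minimum element of A', conditioned on the event that S is the minimum element of A, equals |A| / |A ∪ A'|, which is at least 1/2. -/

import Mathlib

namespace RandomOrder

variable {U : Type} [Fintype U] [DecidableEq U]

def IsMinOf (σ : U ≃ Fin (Fintype.card U)) (B : Finset U) (S : U) : Prop :=
  S ∈ B ∧ ∀ x ∈ B, x ≠ S → σ S < σ x

open Classical in
lemma key_count (B : Finset U) (S : U) (hS : S ∈ B) :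
    (Finset.univ.filter (fun σ : U ≃ Fin (Fintype.card U) => IsMinOf σ B S)).card * B.card
      = (Fintype.card U).factorial := by
  classical
  set n := Fintype.card U with hn
  have hex : ∀ σ : U ≃ Fin n, ∃ b, b ∈ B ∧ IsMinOf σ B b := by
    intro σ
    obtain ⟨b, hb, hmin⟩ := B.exists_min_image (fun x => σ x) ⟨S, hS⟩
    exact ⟨b, hb, hb, fun x hx hxb =>
      lt_of_le_of_ne (hmin x hx) (fun h => hxb (σ.injective h.symm))⟩
  choose f hfB hfmin using hex
  have huniq : ∀ (σ) (b), IsMinOf σ B b → f σ = b := by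
    intro σ b hb
    by_contra h
    exact absurd ((hfmin σ).2 b hb.1 (Ne.symm h))
      (not_lt.mpr (le_of_lt (hb.2 (f σ) (hfB σ) h)))
  -- all fibers have equal size
  have hswap : ∀ b ∈ B,
      (Finset.univ.filter (fun σ : U ≃ Fin n => IsMinOf σ B b)).card =
      (Finset.univ.filter (fun σ : U ≃ Fin n => IsMinOf σ B S)).card := by
    intro b hb
    have gen : ∀ (x y : U), x ∈ B → y ∈ B → ∀ σ : U ≃ Fin n, IsMinOf σ B x →
        IsMinOf ((Equiv.swap x y).trans σ) B y := by
      intro x y hx hy σ hσ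
      refine ⟨hy, fun z hz hzy => ?_⟩
      have h1 : ((Equiv.swap x y).trans σ) y = σ x := by simp
      have hsz : Equiv.swap x y z ∈ B := by
        rcases eq_or_ne z x with rfl | hzx
        · simpa [Equiv.swap_apply_left] using hy
        · rcases eq_or_ne z y with rfl | hzy'
          · simpa [Equiv.swap_apply_right] using hx
          · rwa [Equiv.swap_apply_of_ne_of_ne hzx hzy']
      have hne : Equiv.swap x y z ≠ x := by
        intro h
        apply hzy
        have := congrArg (Equiv.swap x y) h
        rwa [Equiv.swap_apply_self, Equiv.swap_apply_left] at this
      simp only [Equiv.trans_apply, h1]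
      exact hσ.2 _ hsz hne
    apply Finset.card_bij' (fun σ _ => (Equiv.swap b S).trans σ)
      (fun σ _ => (Equiv.swap b S).trans σ)
    · intro σ hσ
      simp only [Finset.mem_filter, Finset.mem_univ, true_and] at *
      exact gen b S hb hS σ hσ
    · intro σ hσ
      simp only [Finset.mem_filter, Finset.mem_univ, true_and] at *
      rw [Equiv.swap_comm b S]
      exact gen S b hS hb σ hσ
    all_goals intro σ hσ
    all_goals ext x
    all_goals simp only [Equiv.trans_apply, Equiv.swap_apply_self]
  have hsum : (Fintype.card (U ≃ Fin n)) =
      ∑ b ∈ B, (Finset.univ.filter (fun σ : U ≃ Fin n => f σ = b)).card := by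
    rw [← Finset.card_univ]
    convert Finset.card_eq_sum_card_fiberwise (fun σ _ => hfB σ)
  have hfib : ∀ b ∈ B, (Finset.univ.filter (fun σ : U ≃ Fin n => f σ = b)).card =
      (Finset.univ.filter (fun σ : U ≃ Fin n => IsMinOf σ B b)).card := by
    intro b hb
    congr 1
    refine Finset.filter_congr fun σ _ => ?_
    constructor
    · rintro rfl; exact hfmin σ
    · exact huniq σ b
  have hcard : Fintype.card (U ≃ Fin n) = n.factorial :=
    Fintype.card_equiv (Fintype.equivFin U)
  calc (Finset.univ.filter (fun σ : U ≃ Fin n => IsMinOf σ B S)).card * B.card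
      = ∑ b ∈ B, (Finset.univ.filter (fun σ : U ≃ Fin n => IsMinOf σ B S)).card := by
        rw [Finset.sum_const, smul_eq_mul, mul_comm]
    _ = ∑ b ∈ B, (Finset.univ.filter (fun σ : U ≃ Fin n => f σ = b)).card := by
        refine Finset.sum_congr rfl fun b hb => ?_
        rw [hfib b hb, hswap b hb]
    _ = n.factorial := by rw [← hsum, hcard]

theorem statement16 (A A' : Finset U) (S : U) (hS : S ∈ A ∩ A') (hcard : A'.card ≤ A.card) :
    (({σ : U ≃ Fin (Fintype.card U) | IsMinOf σ A S ∧ IsMinOf σ A' S} : Set _).ncard : ℝ) /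
        (({σ : U ≃ Fin (Fintype.card U) | IsMinOf σ A S} : Set _).ncard : ℝ) =
      (A.card : ℝ) / ((A ∪ A').card : ℝ) ∧
    (1 : ℝ) / 2 ≤ (A.card : ℝ) / ((A ∪ A').card : ℝ) := by
  classical
  obtain ⟨hSA, hSA'⟩ := Finset.mem_inter.mp hS
  have hSU : S ∈ A ∪ A' := Finset.mem_union_left _ hSA
  -- rewrite the conjunction event
  have hset : ({σ : U ≃ Fin (Fintype.card U) | IsMinOf σ A S ∧ IsMinOf σ A' S} : Set _) =
      {σ | IsMinOf σ (A ∪ A') S} := by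
    ext σ
    simp only [Set.mem_setOf_eq]
    constructor
    · rintro ⟨h1, h2⟩
      refine ⟨hSU, fun x hx hxS => ?_⟩
      rcases Finset.mem_union.mp hx with hx | hx
      · exact h1.2 x hx hxS
      · exact h2.2 x hx hxS
    · rintro ⟨_, h⟩
      exact ⟨⟨hSA, fun x hx hxS => h x (Finset.mem_union_left _ hx) hxS⟩,
        ⟨hSA', fun x hx hxS => h x (Finset.mem_union_right _ hx) hxS⟩⟩
  have hnc : ∀ (B : Finset U),
      ({σ : U ≃ Fin (Fintype.card U) | IsMinOf σ B S} : Set _).ncard =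
      (Finset.univ.filter (fun σ : U ≃ Fin (Fintype.card U) => IsMinOf σ B S)).card := by
    intro B
    rw [Set.ncard_eq_toFinset_card']
    congr 1
    ext σ
    simp
  have k1 := key_count (A ∪ A') S hSU
  have k2 := key_count A S hSA
  set a : ℕ := (Finset.univ.filter
    (fun σ : U ≃ Fin (Fintype.card U) => IsMinOf σ (A ∪ A') S)).card with ha
  set b : ℕ := (Finset.univ.filter
    (fun σ : U ≃ Fin (Fintype.card U) => IsMinOf σ A S)).card with hb
  have hb0 : b ≠ 0 := by
    intro h
    rw [h, zero_mul] at k2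
    exact (Nat.factorial_ne_zero _) k2.symm
  have hA0 : A.card ≠ 0 := Finset.card_ne_zero_of_mem hSA
  have hU0 : (A ∪ A').card ≠ 0 := Finset.card_ne_zero_of_mem hSU
  have hcross : (a : ℝ) * (A ∪ A').card = (b : ℝ) * A.card := by
    have : a * (A ∪ A').card = b * A.card := by rw [k1, k2]
    exact_mod_cast this
  constructor
  · rw [hset, hnc, hnc, ← ha, ← hb]
    rw [div_eq_div_iff (by exact_mod_cast hb0) (by exact_mod_cast hU0)]
    linarith [hcross]
  · have h2 : ((A ∪ A').card : ℝ) ≤ 2 * A.card := by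
      have := Finset.card_union_le A A'
      exact_mod_cast le_trans this (by omega)
    have hUpos : (0 : ℝ) < (A ∪ A').card := by
      exact_mod_cast Nat.pos_of_ne_zero hU0
    rw [div_le_div_iff₀ (by norm_num) hUpos]
    linarith

end RandomOrder
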